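/- Let N ≥ 2 be an integer, and for 0 ≤ n ≤ N−2 let a_n, b_n be real numbers and c_n complex numbers satisfying the reflection-symmetry conditions a_n = a_{N−2−n}, b_n = b_{N−2−n}, c_n = c_{N−2−n}. Take g = −1, so ψ^(−1) = (−e_{(0,1)} − e_{(1,0)})/√2. Define the operator H = Σ_{n=0}^{N−2} T_{n,n+1} on the N-qubit space, where T_{n,n+1} is the two-site embedding of the 4×4 matrix a_n|ψ^(−1)⟩⟨ψ^(−1)| + b_n|e_{(1,1)}⟩⟨e_{(1,1)}| + c_n|ψ^(−1)⟩⟨e_{(1,1)}| + conj(c_n)|e_{(1,1)}⟩⟨ψ^(−1)|. Let R be the reflection operator on the N-qubit space, (R v)(s) = v(s ∘ ρ) where ρ(j) = N−1−j. Then R ∘ H ∘ R = H. -/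

import Mathlib

open scoped BigOperators

noncomputable section

/-- The `N`-qubit space: complex functions on configurations `Fin N → Fin 2`. -/
abbrev NQubit (N : ℕ) : Type := (Fin N → Fin 2) → ℂ

/-- The two-qubit basis vector `e_{(a,b)}`. -/
def eBasis (a b : Fin 2) : Fin 2 × Fin 2 → ℂ := Pi.single (a, b) (1 : ℂ)

/-- The two-qubit vector `ψ^(g) = (conj g · e_{(0,1)} − e_{(1,0)}) / √(1+|g|²)`. -/
def psiVec (g : ℂ) : Fin 2 × Fin 2 → ℂ :=
  (Real.sqrt (1 + ‖g‖ ^ 2))⁻¹ •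
    ((starRingEnd ℂ g) • eBasis 0 1 - eBasis 1 0)

/-- The two-qubit basis vector `e_{(1,1)}`. -/
def e11 : Fin 2 × Fin 2 → ℂ := eBasis 1 1

/-- The rank-one matrix `|v⟩⟨w|`, with entries `v p * conj (w q)`. -/
def outer (v w : Fin 2 × Fin 2 → ℂ) : Matrix (Fin 2 × Fin 2) (Fin 2 × Fin 2) ℂ :=
  Matrix.vecMulVec v (star w)

/-- The 4×4 PVBS projector matrix `P^(g) = |e_{(1,1)}⟩⟨e_{(1,1)}| + |ψ^(g)⟩⟨ψ^(g)|`. -/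
def pvbsProj (g : ℂ) : Matrix (Fin 2 × Fin 2) (Fin 2 × Fin 2) ℂ :=
  outer e11 e11 + outer (psiVec g) (psiVec g)

/-- The embedding of a 4×4 matrix `m` as an operator acting on sites `n`, `n'` of the
`N`-qubit chain: `⟨e_s, m_{n,n'} e_t⟩ = m (s n, s n') (t n, t n')` if `s = t` away from
`{n, n'}`, and `0` otherwise. -/
def twoSite (N : ℕ) (m : Matrix (Fin 2 × Fin 2) (Fin 2 × Fin 2) ℂ) (n n' : Fin N) :
    Matrix (Fin N → Fin 2) (Fin N → Fin 2) ℂ :=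
  fun s t =>
    if ∀ j : Fin N, j ≠ n → j ≠ n' → s j = t j then m (s n, s n') (t n, t n') else 0


/-- The local PVBS-deformed interaction
`a|ψ^(g)⟩⟨ψ^(g)| + b|e₁₁⟩⟨e₁₁| + c|ψ^(g)⟩⟨e₁₁| + conj c |e₁₁⟩⟨ψ^(g)|`. -/
def locMat (a b : ℝ) (c g : ℂ) : Matrix (Fin 2 × Fin 2) (Fin 2 × Fin 2) ℂ :=
  (a : ℂ) • outer (psiVec g) (psiVec g) + (b : ℂ) • outer e11 e11 +
    c • outer (psiVec g) e11 + (starRingEnd ℂ c) • outer e11 (psiVec g)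

/-- The PVBS-deformed Hamiltonian `H = ∑_{n=0}^{N-2} T_{n,n+1}` on the `N`-qubit chain. -/
def pvbsHam (N : ℕ) (a b : ℕ → ℝ) (c : ℕ → ℂ) (g : ℂ) :
    Matrix (Fin N → Fin 2) (Fin N → Fin 2) ℂ :=
  ∑ n : Fin (N - 1),
    twoSite N (locMat (a n) (b n) (c n) g)
      ⟨(n : ℕ), by have := n.isLt; omega⟩ ⟨(n : ℕ) + 1, by have := n.isLt; omega⟩

/-- The reflection operator, `(R v)(s) = v (s ∘ ρ)` with `ρ(j) = N−1−j`. -/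
def reflOp (N : ℕ) (v : NQubit N) : NQubit N := fun s => v (fun j => s (Fin.rev j))

lemma psi_symm (x y : Fin 2) : psiVec (-1) (x, y) = psiVec (-1) (y, x) := by
  fin_cases x <;> fin_cases y <;> simp [psiVec, eBasis, Pi.single, Function.update]

lemma e11_symm (x y : Fin 2) : e11 (x, y) = e11 (y, x) := by
  fin_cases x <;> fin_cases y <;> simp [e11, eBasis, Pi.single, Function.update]

lemma locMat_symm (a b : ℝ) (c : ℂ) (x y z w : Fin 2) :
    locMat a b c (-1) (x, y) (z, w) = locMat a b c (-1) (y, x) (w, z) := by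
  simp only [locMat, outer, Matrix.add_apply, Matrix.smul_apply, Matrix.vecMulVec_apply,
    Pi.star_apply, smul_eq_mul]
  rw [psi_symm x y, psi_symm z w, e11_symm x y, e11_symm z w]

lemma twoSite_rev (N : ℕ) (m : Matrix (Fin 2 × Fin 2) (Fin 2 × Fin 2) ℂ)
    (hm : ∀ x y z w, m (x, y) (z, w) = m (y, x) (w, z))
    (k : ℕ) (hk : k + 1 < N) (s t : Fin N → Fin 2) :
    twoSite N m ⟨k, by omega⟩ ⟨k + 1, hk⟩ (fun j => s (Fin.rev j)) (fun j => t (Fin.rev j)) =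
    twoSite N m ⟨N - 2 - k, by omega⟩ ⟨N - 2 - k + 1, by omega⟩ s t := by
  have h1 : (⟨N - 2 - k + 1, by omega⟩ : Fin N) = Fin.rev ⟨k, by omega⟩ := by
    ext; simp [Fin.val_rev]; omega
  have h2 : (⟨N - 2 - k, by omega⟩ : Fin N) = Fin.rev ⟨k + 1, hk⟩ := by
    ext; simp [Fin.val_rev]; omega
  rw [twoSite, twoSite, h1, h2]
  have hcond : (∀ j : Fin N, j ≠ ⟨k, by omega⟩ → j ≠ ⟨k + 1, hk⟩ →
      s (Fin.rev j) = t (Fin.rev j)) ↔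
      (∀ j : Fin N, j ≠ Fin.rev ⟨k + 1, hk⟩ → j ≠ Fin.rev ⟨k, by omega⟩ → s j = t j) := by
    constructor
    · intro h j hj1 hj2
      have := h (Fin.rev j) (by simpa using fun e => hj2 (by rw [← e, Fin.rev_rev]))
        (by simpa using fun e => hj1 (by rw [← e, Fin.rev_rev]))
      simpa [Fin.rev_rev] using this
    · intro h j hj1 hj2
      exact h (Fin.rev j) (fun e => hj2 (Fin.rev_injective (by simpa [Fin.rev_rev] using e)))
        (fun e => hj1 (Fin.rev_injective (by simpa [Fin.rev_rev] using e)))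
  rw [if_congr hcond rfl rfl]
  split
  · exact hm _ _ _ _
  · rfl

/-- Reflection symmetry of the PVBS-deformed Hamiltonian at `g = −1` (supplementary
material): for reflection-symmetric coefficients, `R ∘ H ∘ R = H`. -/
theorem pvbsHam_reflection_symmetry_neg_one (N : ℕ) (hN : 2 ≤ N)
    (a b : ℕ → ℝ) (c : ℕ → ℂ)
    (hsym : ∀ n ≤ N - 2, a n = a (N - 2 - n) ∧ b n = b (N - 2 - n) ∧ c n = c (N - 2 - n)) :
    ∀ v : NQubit N,
      reflOp N ((pvbsHam N a b c (-1)).mulVec (reflOp N v)) =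
        (pvbsHam N a b c (-1)).mulVec v := by
  have key : ∀ s t : Fin N → Fin 2,
      pvbsHam N a b c (-1) (fun j => s (Fin.rev j)) (fun j => t (Fin.rev j)) =
      pvbsHam N a b c (-1) s t := by
    intro s t
    simp only [pvbsHam, Matrix.sum_apply]
    refine Fintype.sum_equiv (Fin.revPerm) _ _ fun n => ?_
    have hn := n.isLt
    have hv : ((Fin.revPerm n : Fin (N - 1)) : ℕ) = N - 2 - (n : ℕ) := by
      simp [Fin.val_rev]; omega
    obtain ⟨ha, hb, hc⟩ := hsym (n : ℕ) (by omega)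
    rw [twoSite_rev N _ (locMat_symm _ _ _) (n : ℕ) (by omega) s t]
    simp only [ha, hb, hc, hv]
  intro v
  funext s
  simp only [reflOp, Matrix.mulVec, dotProduct]
  refine Fintype.sum_equiv
    (Equiv.arrowCongr (Fin.revPerm) (Equiv.refl (Fin 2))) _ _ fun t => ?_
  have ht : (Equiv.arrowCongr (Fin.revPerm) (Equiv.refl (Fin 2)) t) =
      fun j => t (Fin.rev j) := by
    funext j; simp [Equiv.arrowCongr]
  rw [ht]
  have h2 := key s (fun j => t (Fin.rev j))
  simp only [Fin.rev_rev] at h2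
  rw [← h2]
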